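/- Let R be a left artinian ring, let U be a finitely generated uniserial left R-module, and let M be a finitely generated left R-module. If g : U → M is an irreducible surjective R-linear map, then there exists an R-module isomorphism ψ : M → U/soc(U) such that the composite ψ ∘ g : U → U/soc(U) equals the natural quotient projection U → U/soc(U). -/
import Mathlib


/-- A module is *uniserial* if its submodules are totally ordered by inclusion. -/
def IsUniserialModule (R M : Type) [Ring R] [AddCommGroup M] [Module R M] : Prop :=
  ∀ N₁ N₂ : Submodule R M, N₁ ≤ N₂ ∨ N₂ ≤ N₁

/-- The Jacobson radical of the ring `R` (the intersection of the maximal left ideals). -/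
noncomputable def ringJacobson (R : Type) [Ring R] : Ideal R :=
  Ideal.jacobson (⊥ : Ideal R)

/-- The submodule `J•M`, where `J` is the Jacobson radical of `R`. -/
noncomputable def radicalSubmodule (R M : Type) [Ring R] [AddCommGroup M] [Module R M] :
    Submodule R M :=
  ringJacobson R • (⊤ : Submodule R M)

/-- The socle of a module: the sum of all of its simple submodules. -/
def socle (R M : Type) [Ring R] [AddCommGroup M] [Module R M] : Submodule R M :=
  sSup {N : Submodule R M | IsSimpleModule R ↥N}

/-- A linear map is a split monomorphism if it has a left inverse. -/
def IsSplitMono {R M N : Type} [Ring R] [AddCommGroup M] [Module R M]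
    [AddCommGroup N] [Module R N] (f : M →ₗ[R] N) : Prop :=
  ∃ g : N →ₗ[R] M, g ∘ₗ f = LinearMap.id

/-- A linear map is a split epimorphism if it has a right inverse. -/
def IsSplitEpi {R M N : Type} [Ring R] [AddCommGroup M] [Module R M]
    [AddCommGroup N] [Module R N] (f : M →ₗ[R] N) : Prop :=
  ∃ g : N →ₗ[R] M, f ∘ₗ g = LinearMap.id

/-- A linear map `f : M → N` is *irreducible* if it is neither a split monomorphism nor a
split epimorphism, and in any factorization `f = g ∘ h`, either `h` is a split monomorphism
or `g` is a split epimorphism. -/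
def IsIrreducibleMap {R M N : Type} [Ring R] [AddCommGroup M] [Module R M]
    [AddCommGroup N] [Module R N] (f : M →ₗ[R] N) : Prop :=
  ¬ IsSplitMono f ∧ ¬ IsSplitEpi f ∧
    ∀ (X : Type) [AddCommGroup X] [Module R X] (h : M →ₗ[R] X) (g : X →ₗ[R] N),
      g ∘ₗ h = f → IsSplitMono h ∨ IsSplitEpi g

/-- A module is *indecomposable* if it is nonzero and is not the internal direct sum of two
nonzero submodules. -/
def IsIndecomposableModule (R M : Type) [Ring R] [AddCommGroup M] [Module R M] : Prop :=
  Nontrivial M ∧ ∀ N₁ N₂ : Submodule R M, IsCompl N₁ N₂ → N₁ = ⊥ ∨ N₂ = ⊥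

/-- If `R` is a left artinian ring, `U` a finitely generated uniserial `R`-module, `M` a
finitely generated `R`-module, and `g : U → M` an irreducible surjective `R`-linear map, then
there is an isomorphism `ψ : M ≃ U/soc U` with `ψ ∘ g` equal to the natural projection
`U → U/soc U`. -/
theorem irreducible_surjective_from_uniserial
    (R U M : Type) [Ring R] [IsArtinianRing R]
    [AddCommGroup U] [Module R U] [Module.Finite R U]
    [AddCommGroup M] [Module R M] [Module.Finite R M]
    (hU : IsUniserialModule R U)
    (g : U →ₗ[R] M) (hirr : IsIrreducibleMap g) (hsurj : Function.Surjective g) :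
    ∃ ψ : M ≃ₗ[R] (U ⧸ socle R U),
      (ψ : M →ₗ[R] U ⧸ socle R U) ∘ₗ g = (socle R U).mkQ := by
  classical
  -- M is nontrivial, otherwise g would be a split epimorphism
  have hM : Nontrivial M := by
    rcases subsingleton_or_nontrivial M with hM | hM
    · exact absurd ⟨0, by ext x; exact Subsingleton.elim _ _⟩ hirr.2.1
    · exact hM
  -- ker g ≠ ⊥, otherwise g would be bijective, hence a split epimorphism
  have hker_ne : LinearMap.ker g ≠ ⊥ := by
    intro h
    have hbij : Function.Bijective g := ⟨LinearMap.ker_eq_bot.mp h, hsurj⟩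
    refine hirr.2.1 ⟨(LinearEquiv.ofBijective g hbij).symm.toLinearMap, ?_⟩
    ext x
    exact (LinearEquiv.ofBijective g hbij).apply_symm_apply x
  have : IsArtinian R U := inferInstance
  have : IsAtomic (Submodule R U) :=
    isAtomic_of_orderBot_wellFounded_lt (wellFounded_lt (α := Submodule R U))
  -- there is an atom (= simple submodule) below ker g
  obtain ⟨S, hS, hSle⟩ :=
    (IsAtomic.eq_bot_or_exists_atom_le (LinearMap.ker g)).resolve_left hker_ne
  -- the socle is below every nonzero submodule
  have hsocle_le : ∀ N : Submodule R U, N ≠ ⊥ → socle R U ≤ N := by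
    intro N hN
    refine sSup_le fun S' hS' => ?_
    have hatom : IsAtom S' := isSimpleModule_iff_isAtom.mp hS'
    rcases hU S' N with h | h
    · exact h
    · rcases hatom.le_iff.mp h with h' | h'
      · exact absurd h' hN
      · exact h' ▸ le_rfl
  have hS_le_socle : S ≤ socle R U :=
    le_sSup (isSimpleModule_iff_isAtom.mpr hS)
  have hsocle_ne : socle R U ≠ ⊥ := fun h => hS.1 (le_bot_iff.mp (h ▸ hS_le_socle))
  have hle : socle R U ≤ LinearMap.ker g := hsocle_le _ hker_ne
  -- ker g ≤ socle, via irreducibility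
  have hge : LinearMap.ker g ≤ socle R U := by
    by_contra hne
    set π := (socle R U).mkQ with hπ
    set gbar := (socle R U).liftQ g hle with hgbar
    have hfact : gbar ∘ₗ π = g := Submodule.liftQ_mkQ _ _ _
    rcases hirr.2.2 _ π gbar hfact with ⟨l, hl⟩ | ⟨s, hs⟩
    · -- π split mono ⇒ socle = ⊥, contradiction
      apply hsocle_ne
      have hinj : Function.Injective π := by
        intro x y hxy
        have := congrArg l hxy
        simpa using congrArg (fun f => f x) hl |>.symm.trans
          ((this.trans (congrArg (fun f => f y) hl)))
      rw [← Submodule.ker_mkQ (socle R U), LinearMap.ker_eq_bot]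
      exact hinj
    · -- gbar split epi ⇒ two incomparable nonzero submodules in U⧸socle
      -- ker gbar ≠ ⊥
      obtain ⟨x, hxk, hxs⟩ := Set.not_subset.mp hne
      have hK_ne : LinearMap.ker gbar ≠ ⊥ := by
        intro h
        have hx1 : π x ∈ LinearMap.ker gbar := by
          simp only [LinearMap.mem_ker]
          have : gbar (π x) = g x := congrArg (fun f => f x) hfact
          rw [this]
          exact hxk
        rw [h, Submodule.mem_bot] at hx1
        exact hxs ((Submodule.Quotient.mk_eq_zero _).mp hx1)
      -- range s ≠ ⊥
      obtain ⟨m, hm⟩ := exists_ne (0 : M)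
      have hR_ne : LinearMap.range s ≠ ⊥ := by
        intro h
        have hsm : s m ∈ LinearMap.range s := ⟨m, rfl⟩
        rw [h, Submodule.mem_bot] at hsm
        have : gbar (s m) = m := congrArg (fun f => f m) hs
        rw [hsm, map_zero] at this
        exact hm this.symm
      -- disjointness of ker gbar and range s
      have hdisj : ∀ z, z ∈ LinearMap.ker gbar → z ∈ LinearMap.range s → z = 0 := by
        intro z hz1 ⟨w, hw⟩
        have h1 : gbar z = 0 := hz1
        have h2 : gbar (s w) = w := congrArg (fun f => f w) hs
        rw [hw] at h2
        rw [h1] at h2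
        rw [← hw, ← h2, map_zero]
      -- U⧸socle is uniserial
      have hUq : ∀ N₁ N₂ : Submodule R (U ⧸ socle R U), N₁ ≤ N₂ ∨ N₂ ≤ N₁ := by
        intro N₁ N₂
        rcases hU (N₁.comap π) (N₂.comap π) with h | h
        · exact Or.inl ((Submodule.comap_le_comap_iff_of_surjective
            (Submodule.mkQ_surjective _)).mp h)
        · exact Or.inr ((Submodule.comap_le_comap_iff_of_surjective
            (Submodule.mkQ_surjective _)).mp h)
      rcases hUq (LinearMap.ker gbar) (LinearMap.range s) with h | h
      · exact hK_ne (eq_bot_iff.mpr fun z hz => hdisj z hz (h hz))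
      · exact hR_ne (eq_bot_iff.mpr fun z hz => hdisj z (h hz) hz)
  have hkereq : LinearMap.ker g = socle R U := le_antisymm hge hle
  -- build the isomorphism
  set φ := (socle R U).liftQ g hle with hφ
  have hinj : Function.Injective φ := by
    rw [← LinearMap.ker_eq_bot]
    exact Submodule.ker_liftQ_eq_bot _ _ _ (le_of_eq hkereq)
  have hsurjφ : Function.Surjective φ := by
    intro m
    obtain ⟨u, hu⟩ := hsurj m
    exact ⟨Submodule.Quotient.mk u, hu⟩
  set e := LinearEquiv.ofBijective φ ⟨hinj, hsurjφ⟩ with he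
  refine ⟨e.symm, ?_⟩
  ext u
  simp only [LinearMap.coe_comp, Function.comp_apply, LinearEquiv.coe_coe, Submodule.mkQ_apply]
  rw [LinearEquiv.symm_apply_eq]
  show g u = φ (Submodule.Quotient.mk u)
  rw [hφ]
  exact (Submodule.liftQ_apply _ _ _).symm
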